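/- arXiv:1409.0993 — 2 statements merged into one kernel-verified Lean document; each statement's English description precedes it below -/
import Mathlib

section
/- Let h : A → B be a homomorphism of abelian groups whose cokernel has finite exponent. For an abelian group M, let M̂ = lim_{n ≥ 1} M/nM denote the inverse limit over the positive integers ordered by divisibility, with transition maps the natural surjections M/mM → M/nM for n ∣ m; let ĥ : Â → B̂ be the homomorphism induced by h. Then the natural map Coker(h) → Coker(ĥ) is injective. -/
noncomputable section

/-- The subgroup `n M` of `n`-th multiples of the abelian group `M`. -/
def mulRange (n : ℕ) (M : Type*) [AddCommGroup M] : AddSubgroup M :=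
  AddMonoidHom.range (AddMonoidHom.mk' (fun x : M => n • x) fun a b => smul_add n a b)

lemma mulRange_le_of_dvd {M : Type*} [AddCommGroup M] {n m : ℕ} (h : n ∣ m) :
    mulRange m M ≤ mulRange n M := by
  rintro _ ⟨y, rfl⟩
  obtain ⟨c, rfl⟩ := h
  exact ⟨c • y, by simp [mul_smul]⟩

/-- For `n ∣ m`, the natural surjection `M/mM → M/nM`. -/
def transMap {n m : ℕ} (M : Type*) [AddCommGroup M] (h : n ∣ m) :
    M ⧸ mulRange m M →+ M ⧸ mulRange n M :=
  QuotientAddGroup.map (mulRange m M) (mulRange n M) (AddMonoidHom.id M)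
    (fun x hx => mulRange_le_of_dvd h hx)

/-- The map `A/nA → B/nB` induced by a homomorphism `h : A → B`. -/
def mapQuot {A B : Type*} [AddCommGroup A] [AddCommGroup B] (h : A →+ B) (n : ℕ) :
    A ⧸ mulRange n A →+ B ⧸ mulRange n B :=
  QuotientAddGroup.map (mulRange n A) (mulRange n B) h
    (by rintro _ ⟨y, rfl⟩; exact ⟨h y, by simp⟩)

lemma transMap_mapQuot {A B : Type*} [AddCommGroup A] [AddCommGroup B] (h : A →+ B)
    {n m : ℕ} (hd : n ∣ m) (y : A ⧸ mulRange m A) :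
    transMap B hd (mapQuot h m y) = mapQuot h n (transMap A hd y) := by
  induction y using QuotientAddGroup.induction_on with
  | H a => rfl

/-- The completion `M̂ = lim_{n ≥ 1} M/nM` of an abelian group `M`: the subgroup of
`∏_{n ≥ 1} M/nM` consisting of the families compatible with the natural surjections
`M/mM → M/nM` for `n ∣ m`. -/
def hatCompletion (M : Type*) [AddCommGroup M] :
    AddSubgroup (∀ n : ℕ+, M ⧸ mulRange n M) where
  carrier := {x | ∀ (n m : ℕ+) (h : (n : ℕ) ∣ (m : ℕ)), transMap M h (x m) = x n}
  zero_mem' := by intro n m h; simp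
  add_mem' := by
    intro x y hx hy n m h
    simp only [Pi.add_apply, map_add, hx n m h, hy n m h]
  neg_mem' := by
    intro x hx n m h
    simp only [Pi.neg_apply, map_neg, hx n m h]

/-- The natural map `M → M̂`. -/
def toHat (M : Type*) [AddCommGroup M] : M →+ hatCompletion M :=
  AddMonoidHom.mk'
    (fun a => ⟨fun _ => QuotientAddGroup.mk a, fun _ _ _ => rfl⟩)
    (fun a b => by ext n; rfl)

/-- The homomorphism `ĥ : Â → B̂` induced by a homomorphism `h : A → B`. -/
def hatMap {A B : Type*} [AddCommGroup A] [AddCommGroup B] (h : A →+ B) :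
    hatCompletion A →+ hatCompletion B :=
  AddMonoidHom.mk'
    (fun x => ⟨fun n => mapQuot h n (x.1 n),
      fun n m hd => by rw [transMap_mapQuot h hd (x.1 m), x.2 n m hd]⟩)
    (fun x y => by ext n; simp [mapQuot])


/-- **Lemma (abelian groups, (i)).**  Let `h : A → B` be a homomorphism of abelian groups
whose cokernel has finite exponent.  Then the natural map `Coker(h) → Coker(ĥ)` is
injective, where `ĥ : Â → B̂` is the induced homomorphism of completions. -/
theorem injective_cokerMap_hat {A B : Type*} [AddCommGroup A] [AddCommGroup B] (h : A →+ B)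
    (hcoker : ∃ e : ℕ, 0 < e ∧ ∀ x : B ⧸ h.range, e • x = 0) :
    Function.Injective
      (QuotientAddGroup.map h.range (hatMap h).range (toHat B)
        (by rintro _ ⟨a, rfl⟩; exact ⟨toHat A a, by ext n; rfl⟩)) := by
  obtain ⟨e, he, hkill⟩ := hcoker
  rw [injective_iff_map_eq_zero]
  intro x hx
  induction x using QuotientAddGroup.induction_on with
  | H b =>
    rw [QuotientAddGroup.map_mk] at hx
    rw [QuotientAddGroup.eq_zero_iff] at hx ⊢
    obtain ⟨y, hy⟩ := hx
    set N : ℕ+ := ⟨e, he⟩ with hN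
    have hcomp : mapQuot h N (y.1 N) =
        QuotientAddGroup.mk b := congrFun (congrArg Subtype.val hy) N
    obtain ⟨a, ye⟩ := QuotientAddGroup.mk_surjective (y.1 N)
    · rw [← ye] at hcomp
      have : (QuotientAddGroup.mk (h a) : B ⧸ mulRange e B) = QuotientAddGroup.mk b := hcomp
      rw [QuotientAddGroup.eq] at this
      obtain ⟨c, hc⟩ := this
      have hec : e • c ∈ h.range := by
        have := hkill (QuotientAddGroup.mk c)
        rwa [← QuotientAddGroup.mk_nsmul, QuotientAddGroup.eq_zero_iff] at this
      obtain ⟨a', ha'⟩ := hec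
      have hb : b = h (a + a') := by
        simp only [map_add, ha']
        have he2 : (e : ℕ) • c = -h a + b := hc
        rw [he2]; abel
      exact ⟨a + a', hb.symm⟩

end
end

section
/- Let h : A → B be a homomorphism of abelian groups whose cokernel has finite exponent, and suppose that for every integer N > 0 the N-torsion subgroup of B is finite. For an abelian group M, let M̂ = lim_{n ≥ 1} M/nM denote the inverse limit over the positive integers ordered by divisibility, and let ĥ : Â → B̂ be the homomorphism induced by h. Then the natural map from the completion of Ker(h) to Ker(ĥ) is surjective, and the cokernel of the natural map Ker(h) → Ker(ĥ) is a divisible abelian group. -/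
noncomputable section

/-- The natural map `Ker(h) → Ker(ĥ)`. -/
def kerToHatKer {A B : Type*} [AddCommGroup A] [AddCommGroup B] (h : A →+ B) :
    h.ker →+ (hatMap h).ker :=
  AddMonoidHom.codRestrict ((toHat A).comp h.ker.subtype) _
    (fun x => by
      have hx : h x.1 = 0 := x.2
      have : hatMap h (((toHat A).comp h.ker.subtype) x) = 0 := by
        ext n
        show (mapQuot h n (QuotientAddGroup.mk x.1) : B ⧸ mulRange n B) = 0
        show (QuotientAddGroup.mk (h x.1) : B ⧸ mulRange n B) = 0
        rw [hx]
        rfl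
      exact this)

namespace HatAux

open QuotientAddGroup

variable {M : Type*} [AddCommGroup M]

lemma transMap_mk {n m : ℕ} (d : n ∣ m) (a : M) :
    transMap M d ((QuotientAddGroup.mk a : M ⧸ mulRange m M)) =
      (QuotientAddGroup.mk a : M ⧸ mulRange n M) := rfl

lemma mapQuot_mk {A B : Type*} [AddCommGroup A] [AddCommGroup B] (h : A →+ B) (n : ℕ) (a : A) :
    mapQuot h n (QuotientAddGroup.mk a) = QuotientAddGroup.mk (h a) := rfl

lemma mem_mulRange {n : ℕ} {a : M} : a ∈ mulRange n M ↔ ∃ y : M, n • y = a := Iff.rfl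

/-- Index type: `ℕ+` ordered by divisibility. -/
def Idx : Type := ℕ+

def Idx.mk (n : ℕ+) : Idx := n
def Idx.val (n : Idx) : ℕ+ := n

instance : Preorder Idx where
  le a b := (Idx.val a : ℕ) ∣ (Idx.val b : ℕ)
  le_refl a := dvd_refl _
  le_trans a b c := dvd_trans

instance : IsDirected Idx (· ≤ ·) :=
  ⟨fun a b => ⟨Idx.mk (Idx.val a * Idx.val b),
    by show (Idx.val a : ℕ) ∣ ((Idx.val a * Idx.val b : ℕ+) : ℕ); rw [PNat.mul_coe]; exact dvd_mul_right _ _,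
    by show (Idx.val b : ℕ) ∣ ((Idx.val a * Idx.val b : ℕ+) : ℕ); rw [PNat.mul_coe]; exact dvd_mul_left _ _⟩⟩

lemma transMap_self {n : ℕ} (d : n ∣ n) (x : M ⧸ mulRange n M) : transMap M d x = x := by
  induction x using QuotientAddGroup.induction_on with
  | H a => rfl

lemma transMap_trans {n m p : ℕ} (h1 : n ∣ m) (h2 : m ∣ p) (h3 : n ∣ p)
    (x : M ⧸ mulRange p M) : transMap M h1 (transMap M h2 x) = transMap M h3 x := by
  induction x using QuotientAddGroup.induction_on with
  | H a => rfl

open CategoryTheory in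
/-- The inverse system of fibers over `y` of the maps `Ker(h)/m Ker(h) → A/mA`. -/
def fiberFunctor {A B : Type*} [AddCommGroup A] [AddCommGroup B] (h : A →+ B)
    (y : hatCompletion A) : Idxᵒᵖ ⥤ Type _ where
  obj j := { x : h.ker ⧸ mulRange ((Idx.val j.unop : ℕ+) : ℕ) h.ker //
      mapQuot h.ker.subtype ((Idx.val j.unop : ℕ+) : ℕ) x = y.1 (Idx.val j.unop) }
  map {j j'} f := TypeCat.ofHom fun x => ⟨transMap h.ker (leOfHom f.unop) x.1, by
    rw [← transMap_mapQuot h.ker.subtype (leOfHom f.unop) x.1, x.2,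
      y.2 (Idx.val j'.unop) (Idx.val j.unop) (leOfHom f.unop)]⟩
  map_id j := by
    ext x
    exact transMap_self _ x.1
  map_comp {j j' j''} f g := by
    ext x
    exact (transMap_trans _ _ _ x.1).symm


lemma fiber_nonempty {A B : Type*} [AddCommGroup A] [AddCommGroup B] (h : A →+ B)
    (hcoker : ∃ e : ℕ, 0 < e ∧ ∀ x : B ⧸ h.range, e • x = 0)
    (y : hatCompletion A)
    (hy : ∀ m : ℕ+, mapQuot h ((m : ℕ+) : ℕ) (y.1 m) = 0) (m : ℕ+) :
    ∃ k : h.ker, mapQuot h.ker.subtype ((m : ℕ+) : ℕ) (QuotientAddGroup.mk k) = y.1 m := by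
  obtain ⟨e, he, hek⟩ := hcoker
  set e' : ℕ+ := ⟨e, he⟩ with he'
  obtain ⟨a, ha⟩ := QuotientAddGroup.mk_surjective (y.1 (m * e'))
  have h1 : mapQuot h (((m * e' : ℕ+)) : ℕ) (y.1 (m * e')) = 0 := hy (m * e')
  rw [← ha, mapQuot_mk] at h1
  obtain ⟨b, hb⟩ := (QuotientAddGroup.eq_zero_iff _).1 h1
  -- hb : ((m*e' : ℕ+):ℕ) • b = h a
  have hb' : ((m * e' : ℕ+) : ℕ) • b = h a := hb
  have h3 : (e : ℕ) • b ∈ h.range := by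
    have h4 := hek (QuotientAddGroup.mk b)
    rw [← QuotientAddGroup.mk_nsmul h.range b e] at h4
    exact (QuotientAddGroup.eq_zero_iff _).1 h4
  obtain ⟨c, hc⟩ := h3
  have hk : h (a - (m : ℕ) • c) = 0 := by
    rw [map_sub, map_nsmul, hc, ← hb', PNat.mul_coe, mul_smul]
    exact sub_self _
  refine ⟨⟨a - (m : ℕ) • c, hk⟩, ?_⟩
  have hdvd : ((m : ℕ+) : ℕ) ∣ ((m * e' : ℕ+) : ℕ) := by
    rw [PNat.mul_coe]; exact dvd_mul_right _ _
  have hy2 := y.2 m (m * e') hdvd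
  rw [← ha, transMap_mk] at hy2
  rw [mapQuot_mk, ← hy2]
  refine (QuotientAddGroup.eq_iff_sub_mem).2 ?_
  refine ⟨-c, ?_⟩
  show ((m : ℕ) : ℕ) • (-c) = _
  simp

lemma fiber_finite {A B : Type*} [AddCommGroup A] [AddCommGroup B] (h : A →+ B)
    (htors : ∀ N : ℕ, 0 < N → {x : B | N • x = 0}.Finite) (m : ℕ+)
    (t : A ⧸ mulRange ((m : ℕ+) : ℕ) A) :
    Finite { x : h.ker ⧸ mulRange ((m : ℕ+) : ℕ) h.ker //
      mapQuot h.ker.subtype ((m : ℕ+) : ℕ) x = t } := by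
  set S := { x : h.ker ⧸ mulRange ((m : ℕ+) : ℕ) h.ker //
      mapQuot h.ker.subtype ((m : ℕ+) : ℕ) x = t } with hS
  rcases isEmpty_or_nonempty S with hE | hNE
  · exact Finite.of_subsingleton
  obtain ⟨x₀⟩ := hNE
  -- torsion subgroups
  set Bm : AddSubgroup B :=
    (AddMonoidHom.mk' (fun b : B => ((m : ℕ+) : ℕ) • b) (fun a b => smul_add _ a b)).ker with hBm
  set Am : AddSubgroup A :=
    (AddMonoidHom.mk' (fun a : A => ((m : ℕ+) : ℕ) • a) (fun a b => smul_add _ a b)).ker with hAm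
  haveI hfinBm : Finite Bm := by
    have hfin : {x : B | ((m : ℕ+) : ℕ) • x = 0}.Finite := htors _ m.2
    haveI := hfin.to_subtype
    exact Finite.of_injective (fun b : Bm => (⟨b.1, b.2⟩ : {x : B | ((m : ℕ+) : ℕ) • x = 0}))
      (fun b b' hbb => Subtype.ext (congrArg Subtype.val hbb))
  set g : Am →+ Bm := AddMonoidHom.codRestrict (h.comp Am.subtype) Bm
    (fun x => by
      show ((m : ℕ+) : ℕ) • h x.1 = 0
      rw [← map_nsmul]
      have : ((m : ℕ+) : ℕ) • x.1 = 0 := x.2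
      rw [this, map_zero]) with hg
  haveI : Finite (Bm ⧸ g.range) := Quotient.finite _
  -- the injection
  have hrepex : ∀ x : S, ∃ k : h.ker, QuotientAddGroup.mk k = x.1 - x₀.1 :=
    fun x => QuotientAddGroup.mk_surjective _
  choose rep hrep using hrepex
  have hmem : ∀ x : S, ∃ a : A, ((m : ℕ+) : ℕ) • a = ((rep x : A)) := by
    intro x
    have h1 : mapQuot h.ker.subtype ((m : ℕ+) : ℕ) (x.1 - x₀.1) = 0 := by
      rw [map_sub, x.2, x₀.2, sub_self]
    rw [← hrep x, mapQuot_mk] at h1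
    exact (QuotientAddGroup.eq_zero_iff _).1 h1
  choose aa haa using hmem
  have hbmem : ∀ x : S, h (aa x) ∈ Bm := by
    intro x
    show ((m : ℕ+) : ℕ) • h (aa x) = 0
    rw [← map_nsmul, haa x]
    exact (rep x).2
  have hinj : Function.Injective (fun x : S => (QuotientAddGroup.mk ⟨h (aa x), hbmem x⟩ : Bm ⧸ g.range)) := by
    intro x x' hxx
    obtain ⟨tt, htt⟩ := (QuotientAddGroup.eq_iff_sub_mem).1 hxx
    have htv : h (tt : A) = h (aa x) - h (aa x') := congrArg Subtype.val htt
    have ht0 : ((m : ℕ+) : ℕ) • (tt : A) = 0 := tt.2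
    set u : A := aa x - aa x' - tt with hu
    have hu0 : h u = 0 := by
      rw [hu, map_sub, map_sub, htv]; abel
    have hmu : ((m : ℕ+) : ℕ) • u = (rep x : A) - (rep x' : A) := by
      rw [hu, smul_sub, smul_sub, haa x, haa x', ht0, sub_zero]
    have hsub : rep x - rep x' ∈ mulRange ((m : ℕ+) : ℕ) h.ker := by
      refine ⟨⟨u, hu0⟩, ?_⟩
      apply Subtype.ext
      show ((m : ℕ+) : ℕ) • u = ((rep x - rep x' : h.ker) : A)
      rw [hmu]; rfl
    have hq : (QuotientAddGroup.mk (rep x) : h.ker ⧸ mulRange ((m : ℕ+) : ℕ) h.ker)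
        = QuotientAddGroup.mk (rep x') := (QuotientAddGroup.eq_iff_sub_mem).2 hsub
    rw [hrep x, hrep x'] at hq
    exact Subtype.ext (sub_left_inj.1 hq)
  exact Finite.of_injective _ hinj


def mseq (k : ℕ) : ℕ+ := ⟨Nat.factorial k, Nat.factorial_pos k⟩

lemma mseq_dvd_of_le {k l : ℕ} (hkl : k ≤ l) : ((mseq k : ℕ+) : ℕ) ∣ ((mseq l : ℕ+) : ℕ) :=
  Nat.factorial_dvd_factorial hkl

lemma dvd_mseq (m : ℕ+) : ((m : ℕ+) : ℕ) ∣ ((mseq (m : ℕ) : ℕ+) : ℕ) :=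
  Nat.dvd_factorial m.2 le_rfl

/-- Key divisibility lemma: if `x ∈ M̂` has vanishing component at level `n`,
then `x` is divisible by `n` in `M̂`. -/
lemma exists_div {M : Type*} [AddCommGroup M] (x : hatCompletion M) (n : ℕ+)
    (hx : x.1 n = 0) : ∃ w : hatCompletion M, (n : ℕ) • w = x := by
  have existsC : ∀ m : ℕ+, ∃ c : M,
      (QuotientAddGroup.mk ((n : ℕ) • c) : M ⧸ mulRange ((n * m : ℕ+) : ℕ) M) = x.1 (n * m) := by
    intro m
    obtain ⟨a, ha⟩ := QuotientAddGroup.mk_surjective (x.1 (n * m))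
    have hdvd : ((n : ℕ+) : ℕ) ∣ ((n * m : ℕ+) : ℕ) := by
      rw [PNat.mul_coe]; exact dvd_mul_right _ _
    have h1 := x.2 n (n * m) hdvd
    rw [hx, ← ha, transMap_mk] at h1
    obtain ⟨c, hc⟩ := (QuotientAddGroup.eq_zero_iff _).1 h1
    exact ⟨c, by rw [show (n : ℕ) • c = a from hc, ha]⟩
  set P : ℕ → M → Prop := fun k d =>
    (QuotientAddGroup.mk ((n : ℕ) • d) : M ⧸ mulRange ((n * mseq k : ℕ+) : ℕ) M)
      = x.1 (n * mseq k) with hP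
  have step : ∀ (k : ℕ) (d : M), P k d →
      ∃ d' : M, P (k + 1) d' ∧ d' - d ∈ mulRange ((mseq k : ℕ+) : ℕ) M := by
    intro k d hd
    obtain ⟨c, hc⟩ := existsC (mseq (k + 1))
    have dd : ((n * mseq k : ℕ+) : ℕ) ∣ ((n * mseq (k + 1) : ℕ+) : ℕ) := by
      rw [PNat.mul_coe, PNat.mul_coe]
      exact mul_dvd_mul_left _ (mseq_dvd_of_le (Nat.le_succ k))
    have h1 := x.2 _ _ dd
    rw [← hc, transMap_mk] at h1
    have h2 : (n : ℕ) • c - (n : ℕ) • d ∈ mulRange ((n * mseq k : ℕ+) : ℕ) M :=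
      (QuotientAddGroup.eq_iff_sub_mem).1 (h1.trans hd.symm)
    obtain ⟨s, hs⟩ := h2
    have hs' : ((n * mseq k : ℕ+) : ℕ) • s = (n : ℕ) • c - (n : ℕ) • d := hs
    refine ⟨d + ((mseq k : ℕ+) : ℕ) • s, ?_, ⟨s, by show ((mseq k : ℕ+) : ℕ) • s = _; abel⟩⟩
    have hnd : (n : ℕ) • (d + ((mseq k : ℕ+) : ℕ) • s) = (n : ℕ) • c := by
      rw [smul_add, smul_smul, ← PNat.mul_coe, hs']
      abel
    show (QuotientAddGroup.mk ((n : ℕ) • (d + ((mseq k : ℕ+) : ℕ) • s))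
        : M ⧸ mulRange ((n * mseq (k + 1) : ℕ+) : ℕ) M) = x.1 (n * mseq (k + 1))
    rw [hnd, hc]
  obtain ⟨d0, hd0⟩ := existsC (mseq 0)
  choose f hf1 hf2 using step
  set D : ∀ _ : ℕ, {d : M // P _ d} :=
    fun k => Nat.rec (motive := fun k => {d : M // P k d}) ⟨d0, hd0⟩
      (fun k ih => ⟨f k ih.1 ih.2, hf1 k ih.1 ih.2⟩) k with hD
  have hDstep : ∀ k : ℕ, (D (k + 1)).1 - (D k).1 ∈ mulRange ((mseq k : ℕ+) : ℕ) M :=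
    fun k => hf2 k (D k).1 (D k).2
  have hmono : ∀ k l : ℕ, k ≤ l → (D l).1 - (D k).1 ∈ mulRange ((mseq k : ℕ+) : ℕ) M := by
    intro k l hkl
    induction l, hkl using Nat.le_induction with
    | base => simpa using (mulRange ((mseq k : ℕ+) : ℕ) M).zero_mem
    | succ l hkl ih =>
      have h2 : (D (l + 1)).1 - (D k).1 = ((D (l + 1)).1 - (D l).1) + ((D l).1 - (D k).1) := by
        abel
      rw [h2]
      exact add_mem (mulRange_le_of_dvd (mseq_dvd_of_le hkl) (hDstep l)) ih
  have hwmem : (fun m : ℕ+ => (QuotientAddGroup.mk (D (m : ℕ)).1 : M ⧸ mulRange ((m : ℕ+) : ℕ) M))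
      ∈ hatCompletion M := by
    intro p q hpq
    rw [transMap_mk]
    refine (QuotientAddGroup.eq_iff_sub_mem).2 ?_
    refine mulRange_le_of_dvd (dvd_mseq p) ?_
    exact hmono (p : ℕ) (q : ℕ) (Nat.le_of_dvd q.2 hpq)
  refine ⟨⟨_, hwmem⟩, ?_⟩
  apply Subtype.ext
  funext m
  have hcoe : ((((n : ℕ) • (⟨_, hwmem⟩ : hatCompletion M)) : hatCompletion M) : ∀ p : ℕ+, M ⧸ mulRange ((p : ℕ+) : ℕ) M) m
      = (n : ℕ) • (QuotientAddGroup.mk (D (m : ℕ)).1 : M ⧸ mulRange ((m : ℕ+) : ℕ) M) := rfl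
  rw [hcoe, ← QuotientAddGroup.mk_nsmul]
  have hdd : ((m : ℕ+) : ℕ) ∣ ((n * mseq (m : ℕ) : ℕ+) : ℕ) := by
    rw [PNat.mul_coe]
    exact Dvd.dvd.mul_left (dvd_mseq m) _
  have h1 := x.2 m (n * mseq (m : ℕ)) hdd
  have h2 := congrArg (transMap M hdd) (D (m : ℕ)).2
  rw [transMap_mk, h1] at h2
  exact h2

end HatAux

open HatAux

/-- **Lemma (abelian groups, (ii)).**  Let `h : A → B` be a homomorphism of abelian groups
whose cokernel has finite exponent, and suppose that the `N`-torsion subgroup of `B` is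
finite for every `N > 0`.  Then the natural map from the completion of `Ker(h)` to
`Ker(ĥ)` is surjective, and the cokernel of the natural map `Ker(h) → Ker(ĥ)` is a
divisible abelian group. -/
theorem hatKer_surjective_and_coker_divisible {A B : Type*} [AddCommGroup A] [AddCommGroup B]
    (h : A →+ B)
    (hcoker : ∃ e : ℕ, 0 < e ∧ ∀ x : B ⧸ h.range, e • x = 0)
    (htors : ∀ N : ℕ, 0 < N → {x : B | N • x = 0}.Finite) :
    (∀ y : hatCompletion A, hatMap h y = 0 →
      ∃ x : hatCompletion h.ker, hatMap h.ker.subtype x = y) ∧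
    (∀ (q : (hatMap h).ker ⧸ (kerToHatKer h).range) (n : ℕ), 0 < n → ∃ q', n • q' = q) := by
  have part1 : ∀ y : hatCompletion A, hatMap h y = 0 →
      ∃ x : hatCompletion h.ker, hatMap h.ker.subtype x = y := by
    intro y hy
    have hyc : ∀ m : ℕ+, mapQuot h ((m : ℕ+) : ℕ) (y.1 m) = 0 := by
      intro m
      exact congrArg (fun z : hatCompletion B => z.1 m) hy
    haveI hne : ∀ j : Idxᵒᵖ, Nonempty ((fiberFunctor h y).obj j) := by
      intro j
      obtain ⟨k, hk⟩ := fiber_nonempty h hcoker y hyc (Idx.val j.unop)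
      exact ⟨⟨QuotientAddGroup.mk k, hk⟩⟩
    haveI hfin : ∀ j : Idxᵒᵖ, Finite ((fiberFunctor h y).obj j) :=
      fun j => fiber_finite h htors (Idx.val j.unop) _
    obtain ⟨u, hu⟩ := nonempty_sections_of_finite_inverse_system (fiberFunctor h y)
    have hxmem : (fun m : ℕ+ => (u (Opposite.op (Idx.mk m))).1) ∈ hatCompletion h.ker := by
      intro p q hpq
      have hle : Idx.mk p ≤ Idx.mk q := hpq
      have h2 := hu ((CategoryTheory.homOfLE hle).op)
      exact congrArg Subtype.val h2
    exact ⟨⟨_, hxmem⟩, Subtype.ext (funext fun m => (u (Opposite.op (Idx.mk m))).2)⟩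
  refine ⟨part1, ?_⟩
  have hcomp0 : ∀ v : hatCompletion h.ker, hatMap h (hatMap h.ker.subtype v) = 0 := by
    intro v
    apply Subtype.ext
    funext m
    show mapQuot h ((m : ℕ+) : ℕ) (mapQuot h.ker.subtype ((m : ℕ+) : ℕ) (v.1 m)) = 0
    induction (v.1 m) using QuotientAddGroup.induction_on with
    | H k =>
      rw [mapQuot_mk, mapQuot_mk]
      have hk : h (h.ker.subtype k) = 0 := k.2
      rw [hk]
      rfl
  intro q n hn
  obtain ⟨z, rfl⟩ := QuotientAddGroup.mk_surjective q
  have hz : hatMap h z.1 = 0 := z.2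
  obtain ⟨x, hxz⟩ := part1 z.1 hz
  set n' : ℕ+ := ⟨n, hn⟩ with hn'
  obtain ⟨a0, ha0⟩ := QuotientAddGroup.mk_surjective (x.1 n')
  have hx0 : (x - toHat h.ker a0).1 n' = 0 := by
    show x.1 n' - (toHat h.ker a0).1 n' = 0
    show x.1 n' - QuotientAddGroup.mk a0 = 0
    rw [ha0, sub_self]
  obtain ⟨w, hw⟩ := exists_div (x - toHat h.ker a0) n' hx0
  have hw' : n • w = x - toHat h.ker a0 := hw
  have hWmem : hatMap h.ker.subtype w ∈ (hatMap h).ker := hcomp0 w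
  refine ⟨QuotientAddGroup.mk (⟨hatMap h.ker.subtype w, hWmem⟩ : (hatMap h).ker), ?_⟩
  rw [← QuotientAddGroup.mk_nsmul]
  refine (QuotientAddGroup.eq_iff_sub_mem).2 ⟨-a0, ?_⟩
  have h3 : hatMap h.ker.subtype (toHat h.ker a0) = toHat A (a0 : A) :=
    Subtype.ext (funext fun m => rfl)
  apply Subtype.ext
  have key : ((n • (⟨hatMap h.ker.subtype w, hWmem⟩ : (hatMap h).ker) - z : (hatMap h).ker)
      : hatCompletion A) = -(toHat A (a0 : A)) := by
    show n • (hatMap h.ker.subtype w) - (z : hatCompletion A) = -(toHat A (a0 : A))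
    rw [← map_nsmul, hw', map_sub, hxz, h3]
    abel
  rw [key]
  show ((toHat A).comp h.ker.subtype) (-a0) = -(toHat A (a0 : A))
  rw [map_neg]
  rfl


end
end
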